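/- arXiv:2605.29318 — 4 statements merged into one kernel-verified Lean document; each statement's English description precedes it below -/
import Mathlib

section
/- Let λ, μ ∈ ℝ with λ + μ ≠ 0 and γ = 1 + μ/(λ + μ). The Fréchet derivative of the Neo-Hookean energy density Ψ at the identity matrix I is the zero linear map; that is, the rest configuration F = I is a critical point of Ψ (the rest state is stress-free). -/
open Matrix

attribute [local instance] Matrix.normedAddCommGroup Matrix.normedSpace

/-- Neo-Hookean strain energy density with Lamé parameters `lam`, `mu`,
`γ = 1 + mu / (lam + mu)` and constant offset `E0`. -/
noncomputable def neoHookean (lam mu E0 : ℝ) (F : Matrix (Fin 3) (Fin 3) ℝ) : ℝ :=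
  (1 / 2) * ((lam + mu) * (F.det - (1 + mu / (lam + mu))) ^ 2 + mu * (Fᵀ * F).trace - E0)

/-- The rest configuration `F = I` is a critical point of the Neo-Hookean energy:
the Fréchet derivative at the identity is the zero linear map. -/
theorem neoHookean_fderiv_one (lam mu E0 : ℝ) (hlm : lam + mu ≠ 0) :
    fderiv ℝ (neoHookean lam mu E0) (1 : Matrix (Fin 3) (Fin 3) ℝ) = 0 := by
  classical
  have hE : ∀ i j : Fin 3, HasFDerivAt (fun M : Matrix (Fin 3) (Fin 3) ℝ => M i j)
      (LinearMap.toContinuousLinearMap (Matrix.entryLinearMap ℝ ℝ i j))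
      (1 : Matrix (Fin 3) (Fin 3) ℝ) :=
    fun i j => (LinearMap.toContinuousLinearMap (Matrix.entryLinearMap ℝ ℝ i j)).hasFDerivAt
  have h1 := ((hE 0 0).fun_mul (hE 1 1)).fun_mul (hE 2 2)
  have h2 := ((hE 0 0).fun_mul (hE 1 2)).fun_mul (hE 2 1)
  have h3 := ((hE 0 1).fun_mul (hE 1 0)).fun_mul (hE 2 2)
  have h4 := ((hE 0 1).fun_mul (hE 1 2)).fun_mul (hE 2 0)
  have h5 := ((hE 0 2).fun_mul (hE 1 0)).fun_mul (hE 2 1)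
  have h6 := ((hE 0 2).fun_mul (hE 1 1)).fun_mul (hE 2 0)
  have hdet' := ((((h1.fun_sub h2).fun_sub h3).fun_add h4).fun_add h5).fun_sub h6
  have hfun : (fun M : Matrix (Fin 3) (Fin 3) ℝ => M.det) =
      (fun M : Matrix (Fin 3) (Fin 3) ℝ =>
        M 0 0 * M 1 1 * M 2 2 - M 0 0 * M 1 2 * M 2 1
        - M 0 1 * M 1 0 * M 2 2 + M 0 1 * M 1 2 * M 2 0
        + M 0 2 * M 1 0 * M 2 1 - M 0 2 * M 1 1 * M 2 0) :=
    funext fun M => Matrix.det_fin_three M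
  rw [← hfun] at hdet'
  have htr' := HasFDerivAt.fun_sum (u := (Finset.univ : Finset (Fin 3)))
    (fun i _ => HasFDerivAt.fun_sum (u := (Finset.univ : Finset (Fin 3)))
      (fun k _ => (hE k i).fun_mul (hE k i)))
  have htrfun : (fun F : Matrix (Fin 3) (Fin 3) ℝ => (Fᵀ * F).trace) =
      (fun F : Matrix (Fin 3) (Fin 3) ℝ => ∑ i, ∑ k, F k i * F k i) := by
    funext F
    simp [Matrix.trace, Matrix.diag, Matrix.mul_apply, Matrix.transpose_apply]
  have hsub := hdet'.sub_const (1 + mu / (lam + mu))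
  have hΨ := ((((hsub.fun_mul hsub)).const_mul
      (lam + mu)).fun_add ((htrfun ▸ htr').const_mul mu)).sub_const E0
  have hΨ2 := hΨ.const_mul (1/2 : ℝ)
  have hfun2 : neoHookean lam mu E0 = (fun y : Matrix (Fin 3) (Fin 3) ℝ =>
      1 / 2 * ((lam + mu) * ((y.det - (1 + mu / (lam + mu)))
        * (y.det - (1 + mu / (lam + mu))))
        + mu * ∑ i : Fin 3, ∑ k : Fin 3, y k i * y k i - E0)) := by
    funext F
    have h := congrFun htrfun F
    simp only [neoHookean, h]
    ring
  rw [hfun2]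
  refine hΨ2.fderiv.trans ?_
  ext H
  simp [Matrix.one_apply, Matrix.det_one, Fin.sum_univ_succ]
  field_simp
  ring
  change mu * (0 * H 2 1) * 2 + mu * (0 * H 2 2) * 2 + mu * (0 * H 1 0) * 4 + mu * (0 * H 0 1) * 4 + mu * (0 * H 2 0) * 2 + mu * (0 * H 0 2) * 2 + mu * (0 * H 1 2) * 2 = (0 : ℝ) * 2
  ring
end

section
/- Let λ, μ ∈ ℝ with λ + μ ≠ 0 and γ = 1 + μ/(λ + μ). For every invertible matrix F ∈ Matrix (Fin 3) (Fin 3) ℝ, the Neo-Hookean energy density Ψ is twice Fréchet differentiable at F, and its second derivative, as a bilinear form applied to directions H, K ∈ Matrix (Fin 3) (Fin 3) ℝ, equals μ·tr(Hᵀ K) + (λ + μ)·(2·det F − γ)·(det F)·tr(F⁻¹ H)·tr(F⁻¹ K) − (λ + μ)·(det F − γ)·(det F)·tr(F⁻¹ H F⁻¹ K). -/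
open Matrix

attribute [local instance] Matrix.normedAddCommGroup Matrix.normedSpace

section Aux

attribute [-instance] instTopologicalSpaceMatrix Matrix.instUniformSpace

abbrev E3 := Matrix (Fin 3) (Fin 3) ℝ

/-- entry projection as a continuous linear map -/
noncomputable def eL (i j : Fin 3) : E3 →L[ℝ] ℝ :=
  LinearMap.toContinuousLinearMap
    { toFun := fun X => X i j
      map_add' := fun _ _ => rfl
      map_smul' := fun _ _ => rfl }

@[simp] lemma eL_apply (i j : Fin 3) (X : E3) : eL i j X = X i j := by
  rfl

lemma eL_hasFDerivAt (i j : Fin 3) (X : E3) :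
    HasFDerivAt (fun X : E3 => X i j) (eL i j) X :=
  (eL i j).hasFDerivAt

/-- `(A, H) ↦ tr (A * H)` as a continuous bilinear map -/
noncomputable def tMul : E3 →L[ℝ] E3 →L[ℝ] ℝ :=
  LinearMap.toContinuousLinearMap
    { toFun := fun A => LinearMap.toContinuousLinearMap
        { toFun := fun H => ((A * H : E3)).trace
          map_add' := fun H K => by simp [Matrix.mul_add]
          map_smul' := fun c H => by simp [Matrix.mul_smul] }
      map_add' := fun A B => by
        ext H; simp [Matrix.add_mul]
      map_smul' := fun c A => by
        ext H; simp [Matrix.smul_mul] }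

@[simp] lemma tMul_apply (A H : E3) : tMul A H = (A * H).trace := by
  simp [tMul]

/-- `(A, H) ↦ tr (Aᵀ * H)` as a continuous bilinear map -/
noncomputable def sMul : E3 →L[ℝ] E3 →L[ℝ] ℝ :=
  LinearMap.toContinuousLinearMap
    { toFun := fun A => LinearMap.toContinuousLinearMap
        { toFun := fun H => ((Aᵀ * H : E3)).trace
          map_add' := fun H K => by simp [Matrix.mul_add]
          map_smul' := fun c H => by simp [Matrix.mul_smul] }
      map_add' := fun A B => by
        ext H; simp [Matrix.add_mul, Matrix.transpose_add]
      map_smul' := fun c A => by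
        ext H; simp [Matrix.smul_mul, Matrix.transpose_smul] }

@[simp] lemma sMul_apply (A H : E3) : sMul A H = (Aᵀ * H).trace := by
  simp [sMul]

/-- explicit adjugate (cyclic cofactor formula) -/
noncomputable def Am (X : E3) : E3 :=
  Matrix.of fun i j =>
    X (j+1) (i+1) * X (j+2) (i+2) - X (j+1) (i+2) * X (j+2) (i+1)

@[simp] lemma Am_apply (X : E3) (i j : Fin 3) :
    Am X i j = X (j+1) (i+1) * X (j+2) (i+2) - X (j+1) (i+2) * X (j+2) (i+1) := rfl

lemma Am_eq_adjugate (X : E3) : Am X = X.adjugate := by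
  rw [Matrix.adjugate_fin_three]
  ext i j
  fin_cases i <;> fin_cases j <;> simp [Am] <;> ring

lemma det_hasFDerivAt (X : E3) :
    HasFDerivAt (Matrix.det : E3 → ℝ) (tMul (Am X)) X := by
  have hfun : (Matrix.det : E3 → ℝ) = fun X : E3 =>
      X 0 0 * X 1 1 * X 2 2 - X 0 0 * X 1 2 * X 2 1 - X 0 1 * X 1 0 * X 2 2 +
        X 0 1 * X 1 2 * X 2 0 + X 0 2 * X 1 0 * X 2 1 - X 0 2 * X 1 1 * X 2 0 :=
    funext fun X => Matrix.det_fin_three X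
  rw [hfun]
  have h := (((((((eL_hasFDerivAt 0 0 X).mul (eL_hasFDerivAt 1 1 X)).mul
      (eL_hasFDerivAt 2 2 X)).sub (((eL_hasFDerivAt 0 0 X).mul
      (eL_hasFDerivAt 1 2 X)).mul (eL_hasFDerivAt 2 1 X))).sub
      (((eL_hasFDerivAt 0 1 X).mul (eL_hasFDerivAt 1 0 X)).mul
      (eL_hasFDerivAt 2 2 X))).add (((eL_hasFDerivAt 0 1 X).mul
      (eL_hasFDerivAt 1 2 X)).mul (eL_hasFDerivAt 2 0 X))).add
      (((eL_hasFDerivAt 0 2 X).mul (eL_hasFDerivAt 1 0 X)).mul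
      (eL_hasFDerivAt 2 1 X))).sub (((eL_hasFDerivAt 0 2 X).mul
      (eL_hasFDerivAt 1 1 X)).mul (eL_hasFDerivAt 2 0 X))
  refine h.congr_fderiv ?_
  ext K
  simp [Am, Matrix.trace_fin_three, Matrix.mul_apply, Fin.sum_univ_three]
  ring

lemma q_hasFDerivAt (X : E3) :
    HasFDerivAt (fun X : E3 => ((Xᵀ * X : E3)).trace) ((2:ℝ) • sMul X) X := by
  have hfun : (fun X : E3 => ((Xᵀ * X : E3)).trace) = fun X : E3 =>
      X 0 0 * X 0 0 + X 1 0 * X 1 0 + X 2 0 * X 2 0 +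
      (X 0 1 * X 0 1 + X 1 1 * X 1 1 + X 2 1 * X 2 1) +
      (X 0 2 * X 0 2 + X 1 2 * X 1 2 + X 2 2 * X 2 2) := by
    funext X
    simp [Matrix.trace_fin_three, Matrix.mul_apply, Fin.sum_univ_three]
  rw [hfun]
  have h := ((((eL_hasFDerivAt 0 0 X).mul (eL_hasFDerivAt 0 0 X)).add
      ((eL_hasFDerivAt 1 0 X).mul (eL_hasFDerivAt 1 0 X))).add
      ((eL_hasFDerivAt 2 0 X).mul (eL_hasFDerivAt 2 0 X))).add
      ((((eL_hasFDerivAt 0 1 X).mul (eL_hasFDerivAt 0 1 X)).add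
      ((eL_hasFDerivAt 1 1 X).mul (eL_hasFDerivAt 1 1 X))).add
      ((eL_hasFDerivAt 2 1 X).mul (eL_hasFDerivAt 2 1 X))) |>.add
      ((((eL_hasFDerivAt 0 2 X).mul (eL_hasFDerivAt 0 2 X)).add
      ((eL_hasFDerivAt 1 2 X).mul (eL_hasFDerivAt 1 2 X))).add
      ((eL_hasFDerivAt 2 2 X).mul (eL_hasFDerivAt 2 2 X)))
  refine h.congr_fderiv ?_
  ext K
  simp [Matrix.trace_fin_three, Matrix.mul_apply, Fin.sum_univ_three]
  ring

/-- the bilinear map underlying `Am` -/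
noncomputable def cofB : E3 →L[ℝ] E3 →L[ℝ] E3 :=
  LinearMap.toContinuousLinearMap
    { toFun := fun X => LinearMap.toContinuousLinearMap
        { toFun := fun Y => Matrix.of fun i j =>
            X (j+1) (i+1) * Y (j+2) (i+2) - X (j+1) (i+2) * Y (j+2) (i+1)
          map_add' := fun Y Z => by
            funext i j
            simp [Matrix.add_apply]
            ring
          map_smul' := fun c Y => by
            funext i j
            simp [Matrix.smul_apply]
            ring }
      map_add' := fun X X' => by
        refine ContinuousLinearMap.ext fun Y => ?_
        funext i j
        show (_ : ℝ) = (X (j+1) (i+1) * Y (j+2) (i+2) - X (j+1) (i+2) * Y (j+2) (i+1)) +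
          (X' (j+1) (i+1) * Y (j+2) (i+2) - X' (j+1) (i+2) * Y (j+2) (i+1))
        simp [Matrix.add_apply]
        ring
      map_smul' := fun c X => by
        refine ContinuousLinearMap.ext fun Y => ?_
        funext i j
        show (_ : ℝ) = c * (X (j+1) (i+1) * Y (j+2) (i+2) - X (j+1) (i+2) * Y (j+2) (i+1))
        simp [Matrix.smul_apply]
        ring }

@[simp] lemma cofB_apply (X Y : E3) (i j : Fin 3) :
    cofB X Y i j = X (j+1) (i+1) * Y (j+2) (i+2) - X (j+1) (i+2) * Y (j+2) (i+1) := by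
  rfl

/-- derivative of `Am` at `F` -/
noncomputable def AmD (F : E3) : E3 →L[ℝ] E3 :=
  cofB.precompR E3 F (ContinuousLinearMap.id ℝ E3) +
    cofB.precompL E3 (ContinuousLinearMap.id ℝ E3) F

@[simp] lemma AmD_apply (F K : E3) : AmD F K = cofB F K + cofB K F := by
  simp [AmD]

lemma Am_hasFDerivAt (F : E3) : HasFDerivAt Am (AmD F) F := by
  have h := cofB.hasFDerivAt_of_bilinear (hasFDerivAt_id F) (hasFDerivAt_id F)
  have hfun : Am = fun X : E3 => cofB X X := by
    funext X
    funext i j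
    simp
  rw [hfun, AmD]
  exact h

/-- the key polynomial identity: second derivative of `det` in terms of adjugates -/
lemma keyId (F H K : E3) :
    F.det * ((AmD F H * K).trace) =
      (Am F * H).trace * (Am F * K).trace - (Am F * H * (Am F * K)).trace := by
  simp only [AmD_apply, Matrix.add_mul, Matrix.trace_add]
  simp [Matrix.det_fin_three, Matrix.trace_fin_three, Matrix.mul_apply, Fin.sum_univ_three,
    Matrix.add_apply]
  ring

end Aux

/-- Second Fréchet derivative of the Neo-Hookean energy at an invertible `F`. -/
theorem neoHookean_second_fderiv (lam mu E0 : ℝ) (hlm : lam + mu ≠ 0)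
    (F : Matrix (Fin 3) (Fin 3) ℝ) (hF : IsUnit F.det) :
    DifferentiableAt ℝ (neoHookean lam mu E0) F ∧
      ∃ f'' : Matrix (Fin 3) (Fin 3) ℝ →L[ℝ] Matrix (Fin 3) (Fin 3) ℝ →L[ℝ] ℝ,
        HasFDerivAt (fderiv ℝ (neoHookean lam mu E0)) f'' F ∧
          ∀ H K : Matrix (Fin 3) (Fin 3) ℝ,
            f'' H K =
              mu * (Hᵀ * K).trace +
                (lam + mu) * (2 * F.det - (1 + mu / (lam + mu))) * F.det *
                  (F⁻¹ * H).trace * (F⁻¹ * K).trace -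
                (lam + mu) * (F.det - (1 + mu / (lam + mu))) * F.det *
                  (F⁻¹ * H * F⁻¹ * K).trace := by
  letI : UniformSpace E3 := PseudoMetricSpace.toUniformSpace
  letI : TopologicalSpace E3 := PseudoMetricSpace.toUniformSpace.toTopologicalSpace
  set γ : ℝ := 1 + mu / (lam + mu) with hγ
  -- the first derivative, at every point
  have hΨ : ∀ X : E3, HasFDerivAt (neoHookean lam mu E0)
      (((lam + mu) * (X.det - γ)) • tMul (Am X) + mu • sMul X) X := by
    intro X
    have hfun : neoHookean lam mu E0 = fun X : E3 =>
        (1 / 2) * ((lam + mu) * ((X.det - γ) * (X.det - γ)) + (Xᵀ * X : E3).trace * mu - E0) := by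
      funext X
      simp [neoHookean, sq]
      ring
    rw [hfun]
    have h1 := (det_hasFDerivAt X).sub_const γ
    have h4 := ((((h1.mul h1).const_mul (lam + mu)).add
      ((q_hasFDerivAt X).mul_const mu)).sub_const E0).const_mul (1/2 : ℝ)
    refine h4.congr_fderiv ?_
    ext K
    simp
    ring
  have hdiff : DifferentiableAt ℝ (neoHookean lam mu E0) F := (hΨ F).differentiableAt
  -- the first derivative as a function
  have hfd : fderiv ℝ (neoHookean lam mu E0) =
      fun X : E3 => ((lam + mu) * (X.det - γ)) • tMul (Am X) + mu • sMul X :=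
    funext fun X => (hΨ X).fderiv
  -- derivative of the coefficient
  have hc : HasFDerivAt (fun X : E3 => (lam + mu) * (X.det - γ))
      ((lam + mu) • tMul (Am F)) F :=
    ((det_hasFDerivAt F).sub_const γ).const_mul (lam + mu)
  -- derivative of `X ↦ tMul (Am X)`
  have hv : HasFDerivAt (fun X : E3 => tMul (Am X)) (tMul.comp (AmD F)) F := by
    exact (tMul.hasFDerivAt (x := Am F)).comp F (Am_hasFDerivAt F)
  have hsm : HasFDerivAt (fun X : E3 => mu • sMul X) (mu • sMul) F :=
    (sMul.hasFDerivAt (x := F)).const_smul mu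
  have hg : HasFDerivAt
      (fun X : E3 => ((lam + mu) * (X.det - γ)) • tMul (Am X) + mu • sMul X)
      ((((lam + mu) * (F.det - γ)) • tMul.comp (AmD F) +
        ((lam + mu) • tMul (Am F)).smulRight (tMul (Am F))) + mu • sMul) F :=
    (hc.smul hv).add hsm
  refine ⟨hdiff, (((lam + mu) * (F.det - γ)) • tMul.comp (AmD F) +
        ((lam + mu) • tMul (Am F)).smulRight (tMul (Am F))) + mu • sMul,
      hfd ▸ hg, ?_⟩
  intro H K
  show ((((lam + mu) * (F.det - γ)) • tMul.comp (AmD F) +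
          ((lam + mu) • tMul (Am F)).smulRight (tMul (Am F))) + mu • sMul) H K = _
  have hd : F.det ≠ 0 := hF.ne_zero
  have hAdj : F⁻¹ = (F.det)⁻¹ • Am F := by
    rw [Am_eq_adjugate, Matrix.inv_def, Ring.inverse_eq_inv]
  have t1 : (F⁻¹ * H).trace = (F.det)⁻¹ * (Am F * H).trace := by
    rw [hAdj, Matrix.smul_mul, Matrix.trace_smul, smul_eq_mul]
  have t2 : (F⁻¹ * K).trace = (F.det)⁻¹ * (Am F * K).trace := by
    rw [hAdj, Matrix.smul_mul, Matrix.trace_smul, smul_eq_mul]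
  have t3 : (F⁻¹ * H * F⁻¹ * K).trace =
      (F.det)⁻¹ * ((F.det)⁻¹ * (Am F * H * (Am F * K)).trace) := by
    rw [hAdj]
    simp [Matrix.smul_mul, Matrix.mul_smul, Matrix.trace_smul, smul_eq_mul, Matrix.mul_assoc]
  have hkey : (AmD F H * K).trace =
      (F.det)⁻¹ * ((Am F * H).trace * (Am F * K).trace - (Am F * H * (Am F * K)).trace) := by
    have h0 := keyId F H K
    simp only [AmD_apply] at h0 ⊢
    field_simp
    linear_combination h0
  simp only [ContinuousLinearMap.add_apply, ContinuousLinearMap.coe_smul', Pi.smul_apply,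
    ContinuousLinearMap.coe_comp', Function.comp_apply, ContinuousLinearMap.smulRight_apply,
    smul_eq_mul, tMul_apply, sMul_apply, ContinuousLinearMap.smul_apply]
  rw [hkey, t1, t2, t3]
  field_simp
  ring
end

section
/- Let λ, μ ∈ ℝ with λ + μ ≠ 0 and γ = 1 + μ/(λ + μ). Fix vectors g₁, …, g_K ∈ ℝ³ and an index s ∈ Fin 3, and define f : ℝ^K → ℝ by f(d) = Ψ(I + e_s (Σ_{k=1}^{K} d_k g_k)ᵀ), i.e. the deformation gradient perturbs only the s-th row. Then f is twice differentiable at 0, and its second derivative at 0 applied to directions u, v ∈ ℝ^K equals (λ + 2μ)·(Σ_k u_k g_k)_s·(Σ_k v_k g_k)_s + μ·Σ_{t ≠ s} (Σ_k u_k g_k)_t·(Σ_k v_k g_k)_t; equivalently, the Hessian matrix of f at 0 is (λ + 2μ)·r_s r_sᵀ + μ·Σ_{t ≠ s} r_t r_tᵀ ∈ ℝ^{K×K}, where r_t ∈ ℝ^K is the vector with entries (r_t)_k = (g_k)_t. -/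
open Matrix

lemma neoHookean_det_aux (s : Fin 3) (w : Fin 3 → ℝ) :
    (1 + Matrix.vecMulVec (Pi.single s 1) w).det = 1 + w s := by
  fin_cases s <;>
    simp [Matrix.det_fin_three, Matrix.vecMulVec_apply, Matrix.one_apply, Pi.single_apply]

lemma neoHookean_trace_aux (s : Fin 3) (w : Fin 3 → ℝ) :
    (((1 + Matrix.vecMulVec (Pi.single s 1) w)ᵀ) * (1 + Matrix.vecMulVec (Pi.single s 1) w)).trace
      = 3 + 2 * w s + ∑ t, (w t) ^ 2 := by
  fin_cases s <;>
    simp [Matrix.trace_fin_three, Matrix.mul_apply, Fin.sum_univ_three,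
      Matrix.vecMulVec_apply, Matrix.one_apply, Pi.single_apply, Matrix.transpose_apply] <;> ring

/-- Perturbing only the `s`-th row of the deformation gradient, the Hessian at `0` of
`f(d) = Ψ(I + e_s (Σ_k d_k g_k)ᵀ)` applied to `u, v` is
`(λ + 2μ)(Σ_k u_k g_k)_s (Σ_k v_k g_k)_s + μ Σ_{t ≠ s} (Σ_k u_k g_k)_t (Σ_k v_k g_k)_t`;
equivalently, the Hessian matrix is `(λ + 2μ) r_s r_sᵀ + μ Σ_{t ≠ s} r_t r_tᵀ`
with `(r_t)_k = (g_k)_t`. -/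
theorem neoHookean_row_hessian (lam mu E0 : ℝ) (hlm : lam + mu ≠ 0)
    (K : ℕ) (g : Fin K → Fin 3 → ℝ) (s : Fin 3)
    (f : (Fin K → ℝ) → ℝ)
    (hf : f = fun d =>
      neoHookean lam mu E0
        (1 + Matrix.vecMulVec (Pi.single s 1) (∑ k, d k • g k))) :
    DifferentiableAt ℝ f 0 ∧
      ∃ f'' : (Fin K → ℝ) →L[ℝ] (Fin K → ℝ) →L[ℝ] ℝ,
        HasFDerivAt (fderiv ℝ f) f'' 0 ∧
          (∀ u v : Fin K → ℝ,
            f'' u v =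
              (lam + 2 * mu) * (∑ k, u k • g k) s * (∑ k, v k • g k) s +
                mu * ∑ t ∈ Finset.univ.erase s,
                  (∑ k, u k • g k) t * (∑ k, v k • g k) t) ∧
          (Matrix.of fun k l : Fin K => f'' (Pi.single k 1) (Pi.single l 1)) =
            (lam + 2 * mu) • Matrix.vecMulVec (fun k => g k s) (fun k => g k s) +
              mu • ∑ t ∈ Finset.univ.erase s,
                Matrix.vecMulVec (fun k => g k t) (fun k => g k t) := by
  classical
  -- linear functionals `L t d = (∑ k, d k • g k) t`
  set L : Fin 3 → ((Fin K → ℝ) →L[ℝ] ℝ) := fun t =>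
    ∑ k, (g k t) • (ContinuousLinearMap.proj k : (Fin K → ℝ) →L[ℝ] ℝ) with hLdef
  have hL : ∀ t (d : Fin K → ℝ), L t d = (∑ k, d k • g k) t := by
    intro t d
    simp [hLdef, ContinuousLinearMap.sum_apply, Finset.sum_apply, mul_comm]
  -- the candidate Hessian
  set T : (Fin K → ℝ) →L[ℝ] (Fin K → ℝ) →L[ℝ] ℝ :=
    (lam + 2 * mu) • (L s).smulRight (L s) +
      mu • ∑ t ∈ Finset.univ.erase s, (L t).smulRight (L t) with hTdef
  have hT : ∀ u v : Fin K → ℝ,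
      T u v = (lam + 2 * mu) * (L s u * L s v) +
        mu * ∑ t ∈ Finset.univ.erase s, L t u * L t v := by
    intro u v
    simp [hTdef, ContinuousLinearMap.sum_apply, Finset.sum_apply, mul_assoc]
  have hsymm : ∀ u v : Fin K → ℝ, T u v = T v u := by
    intro u v
    rw [hT, hT]
    rw [Finset.sum_congr rfl fun t _ => mul_comm (L t u) (L t v)]
    ring
  -- `f` is constant plus a pure quadratic
  set C0 : ℝ := (1 / 2) * ((lam + mu) * (mu / (lam + mu)) ^ 2 + mu * 3 - E0) with hC0
  have hfd : f = fun d => C0 + (1 / 2 : ℝ) • T d d := by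
    funext d
    rw [hf]
    simp only [neoHookean, neoHookean_det_aux, neoHookean_trace_aux]
    set w : Fin 3 → ℝ := ∑ k, d k • g k with hw
    rw [hT]
    have hLs : ∀ t, L t d = w t := fun t => hL t d
    simp only [hLs]
    have hsplit : ∑ t, (w t) ^ 2 = (w s) ^ 2 + ∑ t ∈ Finset.univ.erase s, (w t) ^ 2 :=
      (Finset.add_sum_erase _ _ (Finset.mem_univ s)).symm
    have hsq : ∑ t ∈ Finset.univ.erase s, w t * w t
        = ∑ t ∈ Finset.univ.erase s, (w t) ^ 2 :=
      Finset.sum_congr rfl fun t _ => (sq (w t)).symm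
    rw [hsplit, hsq, hC0]
    have h1 : (1 : ℝ) + w s - (1 + mu / (lam + mu)) = w s - mu / (lam + mu) := by ring
    rw [h1]
    field_simp
    ring
  -- first derivative at every point
  have key : ∀ x : Fin K → ℝ, HasFDerivAt f (T x) x := by
    intro x
    have hpair : HasFDerivAt (fun d : Fin K → ℝ => (d, d))
        ((ContinuousLinearMap.id ℝ (Fin K → ℝ)).prod (ContinuousLinearMap.id ℝ (Fin K → ℝ))) x :=
      HasFDerivAt.prodMk (hasFDerivAt_id x) (hasFDerivAt_id x)
    have hb : HasFDerivAt (fun d : Fin K → ℝ => T d d)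
        ((T.isBoundedBilinearMap.deriv (x, x)).comp
          ((ContinuousLinearMap.id ℝ (Fin K → ℝ)).prod (ContinuousLinearMap.id ℝ (Fin K → ℝ)))) x :=
      HasFDerivAt.comp (f := fun d : Fin K → ℝ => (d, d)) x
        (T.isBoundedBilinearMap.hasFDerivAt (x, x)) hpair
    have h3 := (hb.const_smul (1 / 2 : ℝ)).const_add C0
    rw [hfd]
    refine h3.congr_fderiv ?_
    ext u
    have := hsymm x u
    simp only [ContinuousLinearMap.smul_apply, ContinuousLinearMap.comp_apply,
      ContinuousLinearMap.prod_apply, ContinuousLinearMap.coe_id', id_eq,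
      IsBoundedBilinearMap.deriv_apply, smul_eq_mul]
    linarith [hsymm x u]
  have hfderiv : fderiv ℝ f = ⇑T := funext fun x => (key x).fderiv
  refine ⟨(key 0).differentiableAt, T, ?_, ?_, ?_⟩
  · rw [hfderiv]; exact T.hasFDerivAt
  · intro u v
    simp only [hT, hL]
    ring
  · have hsingle : ∀ k : Fin K, (∑ j, (Pi.single k (1 : ℝ) : Fin K → ℝ) j • g j) = g k := by
      intro k
      funext t
      simp [Finset.sum_apply, Pi.single_apply, ite_smul, ite_apply, Finset.sum_ite_eq']
    ext k l
    simp only [Matrix.of_apply, hT, hL, hsingle, Matrix.add_apply, Matrix.smul_apply,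
      Matrix.sum_apply, Matrix.vecMulVec_apply, smul_eq_mul, Finset.mul_sum]
end

section
/- (Discrete form of Proposition 1.) Fix finitely many sample points indexed by i = 1, …, N, with quadrature weights v_i > 0, per-sample Lamé parameters λ_i, μ_i ∈ ℝ with λ_i + μ_i ≠ 0 and γ_i = 1 + μ_i/(λ_i + μ_i), and per-sample kernel gradient vectors g_{i,1}, …, g_{i,K} ∈ ℝ³. Define the discrete elastic energy E : (ℝ³)^K → ℝ by E(d) = Σ_i v_i · Ψ_i(I + Σ_{k=1}^{K} d_k g_{i,k}ᵀ), where Ψ_i is the Neo-Hookean density with parameters λ_i, μ_i, γ_i. For each coordinate s ∈ Fin 3, let H_{ss} ∈ ℝ^{K×K} be the Hessian at 0 of the function ℝ^K → ℝ obtained from E by letting only the s-th components of the nodal displacements d_k vary (all other components held at 0). Then the weight-space Hessian H_w = H_{xx} + H_{yy} + H_{zz} has entries (H_w)_{kl} = Σ_i v_i·(λ_i + 4μ_i)·⟨g_{i,k}, g_{i,l}⟩. -/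
open Matrix

theorem quad_hess {K : ℕ} (c : ℝ) (β : Fin K → Fin K → ℝ) (f : (Fin K → ℝ) → ℝ)
    (hf : ∀ a, f a = c + ∑ k, ∑ l, β k l * a k * a l) (k l : Fin K) :
    fderiv ℝ (fderiv ℝ f) 0 (Pi.single k 1) (Pi.single l 1) = β k l + β l k := by
  set B : (Fin K → ℝ) →L[ℝ] (Fin K → ℝ) →L[ℝ] ℝ :=
    ∑ k', (ContinuousLinearMap.proj k').smulRight
      (∑ l', β k' l' • (ContinuousLinearMap.proj l' : (Fin K → ℝ) →L[ℝ] ℝ)) with hB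
  have hBapp : ∀ a b : Fin K → ℝ, B a b = ∑ k', ∑ l', β k' l' * a k' * b l' := by
    intro a b
    simp [hB, ContinuousLinearMap.sum_apply, smul_eq_mul]
    refine Finset.sum_congr rfl fun k' _ => ?_
    rw [Finset.mul_sum]
    exact Finset.sum_congr rfl fun l' _ => by ring
  have hfB : f = fun a => c + B a a := funext fun a => by rw [hf a, hBapp]
  have hD : ∀ a, HasFDerivAt f (B a + B.flip a) a := by
    intro a
    have h1 := (B.hasFDerivAt_of_bilinear (hasFDerivAt_id a) (hasFDerivAt_id a)).const_add c
    rw [hfB]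
    refine h1.congr_fderiv ?_
    ext x
    simp
  have hfd : fderiv ℝ f = ⇑(B + B.flip) := funext fun a => by
    rw [(hD a).fderiv]; simp
  rw [hfd, ContinuousLinearMap.fderiv]
  simp [hBapp, Pi.single_apply]

theorem det_one_add (s : Fin 3) (w : Fin 3 → ℝ) :
    (1 + Matrix.vecMulVec (Pi.single s (1:ℝ)) w).det = 1 + w s := by
  fin_cases s <;>
    simp [Matrix.det_fin_three, Matrix.vecMulVec_apply, Matrix.one_apply, Pi.single_apply] <;> ring

theorem trace_one_add (s : Fin 3) (w : Fin 3 → ℝ) :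
    ((1 + Matrix.vecMulVec (Pi.single s (1:ℝ)) w)ᵀ * (1 + Matrix.vecMulVec (Pi.single s (1:ℝ)) w)).trace
      = 3 + 2 * w s + ∑ t, w t ^ 2 := by
  fin_cases s <;>
    simp [Matrix.trace, Matrix.mul_apply, Matrix.vecMulVec_apply, Matrix.one_apply, Pi.single_apply,
      Fin.sum_univ_three, Matrix.transpose_apply, Matrix.diag] <;> ring

theorem sum_vecMulVec {K : ℕ} (s : Fin 3) (a : Fin K → ℝ) (g : Fin K → Fin 3 → ℝ) :
    ∑ k, Matrix.vecMulVec (Pi.single s (a k)) (g k)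
      = Matrix.vecMulVec (Pi.single s (1:ℝ)) (fun t => ∑ k, a k * g k t) := by
  ext p q
  rw [Matrix.sum_apply]
  by_cases h : p = s <;>
    simp [Matrix.vecMulVec_apply, Pi.single_apply, h, Finset.mul_sum]

theorem scalar_id (L M e x y : ℝ) (h : L + M ≠ 0) :
    (1/2) * ((L+M) * ((1+x) - (1 + M/(L+M)))^2 + M*(3 + 2*x + y) - e)
      = (1/2) * (M*(M/(L+M)) + 3*M - e) + (1/2) * ((L+M)*x^2 + M*y) := by
  have hx : (1+x) - (1 + M/(L+M)) = x - M/(L+M) := by ring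
  rw [hx]
  field_simp
  ring


/-- Discrete form of Proposition 1: the weight-space Hessian
`H_w = H_xx + H_yy + H_zz` of the discrete elastic energy
`E(d) = Σ_i v_i Ψ_i(I + Σ_k d_k g_{i,k}ᵀ)` has entries
`(H_w)_{kl} = Σ_i v_i (λ_i + 4 μ_i) ⟨g_{i,k}, g_{i,l}⟩`. -/
theorem weight_space_hessian (N K : ℕ) (E0 : ℝ)
    (v lam mu : Fin N → ℝ)
    (hv : ∀ i, 0 < v i) (hlm : ∀ i, lam i + mu i ≠ 0)
    (g : Fin N → Fin K → Fin 3 → ℝ)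
    (E : (Fin K → Fin 3 → ℝ) → ℝ)
    (hE : E = fun d => ∑ i, v i *
      neoHookean (lam i) (mu i) E0 (1 + ∑ k, Matrix.vecMulVec (d k) (g i k))) :
    ∀ k l : Fin K,
      (∑ s : Fin 3,
        fderiv ℝ (fderiv ℝ (fun a : Fin K → ℝ => E fun k' => Pi.single s (a k'))) 0
          (Pi.single k 1) (Pi.single l 1)) =
      ∑ i, v i * (lam i + 4 * mu i) * ∑ t, g i k t * g i l t := by
  intro k l
  have main : ∀ s : Fin 3,
      fderiv ℝ (fderiv ℝ (fun a : Fin K → ℝ => E fun k' => Pi.single s (a k'))) 0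
        (Pi.single k 1) (Pi.single l 1)
      = ∑ i, v i * ((lam i + mu i) * (g i k s * g i l s) + mu i * ∑ t, g i k t * g i l t) := by
    intro s
    set c : ℝ := ∑ i, v i * ((1/2) * (mu i * (mu i / (lam i + mu i)) + 3 * mu i - E0)) with hc
    set β : Fin K → Fin K → ℝ := fun k' l' => ∑ i, v i * ((1/2) *
      ((lam i + mu i) * (g i k' s * g i l' s) + mu i * ∑ t, g i k' t * g i l' t)) with hβ
    have hf : ∀ a : Fin K → ℝ, (fun a : Fin K → ℝ => E fun k' => Pi.single s (a k')) a
        = c + ∑ k', ∑ l', β k' l' * a k' * a l' := by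
      intro a
      simp only [hE, neoHookean, sum_vecMulVec, det_one_add, trace_one_add]
      have step : ∀ i : Fin N,
          v i * (1/2 * ((lam i + mu i) * (1 + (∑ k', a k' * g i k' s) - (1 + mu i / (lam i + mu i)))^2
            + mu i * (3 + 2 * (∑ k', a k' * g i k' s) + ∑ t, (∑ k', a k' * g i k' t)^2) - E0))
          = v i * ((1/2) * (mu i * (mu i / (lam i + mu i)) + 3 * mu i - E0))
            + ∑ k', ∑ l', (v i * ((1/2) *
              ((lam i + mu i) * (g i k' s * g i l' s) + mu i * ∑ t, g i k' t * g i l' t))) * (a k' * a l') := by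
        intro i
        have hx : (∑ k', a k' * g i k' s)^2
            = ∑ k', ∑ l', (a k' * g i k' s) * (a l' * g i l' s) := by
          rw [sq, Finset.sum_mul_sum]
        have hy : ∑ t, (∑ k', a k' * g i k' t)^2
            = ∑ k', ∑ l', (a k' * a l') * ∑ t, g i k' t * g i l' t := by
          simp_rw [sq, Finset.sum_mul_sum]
          rw [Finset.sum_comm]
          refine Finset.sum_congr rfl fun k' _ => ?_
          rw [Finset.sum_comm]
          refine Finset.sum_congr rfl fun l' _ => ?_
          rw [Finset.mul_sum]
          exact Finset.sum_congr rfl fun t _ => by ring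
        rw [scalar_id (lam i) (mu i) E0 _ _ (hlm i), mul_add]
        congr 1
        rw [hx, hy, Finset.mul_sum, Finset.mul_sum, ← Finset.sum_add_distrib,
          Finset.mul_sum, Finset.mul_sum]
        refine Finset.sum_congr rfl fun k' _ => ?_
        rw [Finset.mul_sum, Finset.mul_sum, ← Finset.sum_add_distrib,
          Finset.mul_sum, Finset.mul_sum]
        exact Finset.sum_congr rfl fun l' _ => by ring
      rw [Finset.sum_congr rfl fun i _ => step i, Finset.sum_add_distrib, hc]
      congr 1
      rw [Finset.sum_comm]
      refine Finset.sum_congr rfl fun k' _ => ?_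
      rw [Finset.sum_comm]
      refine Finset.sum_congr rfl fun l' _ => ?_
      rw [hβ, Finset.sum_mul, Finset.sum_mul]
      exact Finset.sum_congr rfl fun i _ => by ring
    rw [quad_hess c β _ hf k l, hβ, ← Finset.sum_add_distrib]
    refine Finset.sum_congr rfl fun i _ => ?_
    have hsym : ∑ t, g i l t * g i k t = ∑ t, g i k t * g i l t :=
      Finset.sum_congr rfl fun t _ => mul_comm _ _
    rw [hsym]
    ring
  rw [Finset.sum_congr rfl fun s _ => main s, Finset.sum_comm]
  refine Finset.sum_congr rfl fun i _ => ?_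
  rw [Fin.sum_univ_three, show (∑ t, g i k t * g i l t)
    = g i k 0 * g i l 0 + g i k 1 * g i l 1 + g i k 2 * g i l 2 from Fin.sum_univ_three _]
  ring
end
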